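/- arXiv:2311.08335 — 2 statements merged into one kernel-verified Lean document; each statement's English description precedes it below -/
import Mathlib

section
/- (Proposition 1, identification) Suppose in the six-arm trial T_VI: (i) A and M are jointly randomized, i.e. (A,M) is independent of all potential outcomes (Y^{a,m}, B^{a,m}) given L; (ii) consistency holds: A=a, M=m imply Y=Y^{a,m} and B=B^{a,m}; (iii) belief determinism: B^{a,m} = m almost surely for m ∈ {0,1}; (iv) dismissible component condition: Y ⊥ M | L, A, B; (v) positivity: P(B=b | L=l, A=a, M=−1) > 0 for all b ∈ {0,1}, all a and all l with P(L=l)>0; and P(A=a, M=m | L=l) > 0 for all a ∈ {0,1}, m ∈ {−1,0,1}. Then for a,m ∈ {0,1}, E[Y^{a,m}] = Σ_l E[Y | L=l, A=a, B=m, M=−1] · P(L=l), i.e. the mean counterfactual outcome is identified from the two-arm (M=−1) data. -/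
open MeasureTheory ProbabilityTheory

set_option linter.unusedSectionVars false

namespace Prop1Aux

variable {Ω : Type*} [mΩ : MeasurableSpace Ω]

lemma const_on_fiber {β : Type*} [m : MeasurableSpace β]
    {W : Ω → β} {f : Ω → ℝ}
    (hf : StronglyMeasurable[MeasurableSpace.comap W m] f)
    {ω₁ ω₂ : Ω} (h : W ω₁ = W ω₂) : f ω₁ = f ω₂ := by
  obtain ⟨t, -, ht⟩ := hf.measurable (measurableSet_singleton (f ω₁))
  have h1 : ω₁ ∈ W ⁻¹' t := by rw [ht]; exact rfl
  have h2 : ω₂ ∈ W ⁻¹' t := by simpa [Set.mem_preimage, ← h] using h1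
  rw [ht] at h2
  exact h2.symm

lemma fiber_mul {β γ δ : Type*} [MeasurableSpace β] [MeasurableSingletonClass β]
    [MeasurableSpace γ] [MeasurableSpace δ]
    [StandardBorelSpace Ω]
    {μ : Measure Ω} [IsProbabilityMeasure μ]
    {W : Ω → β} (hW : Measurable W)
    {X : Ω → γ} {Z : Ω → δ} (hX : Measurable X) (hZ : Measurable Z)
    (hind : CondIndepFun (MeasurableSpace.comap W inferInstance) hW.comap_le X Z μ)
    {S : Set γ} {T : Set δ} (hS : MeasurableSet S) (hT : MeasurableSet T) (w : β) :
    μ (X ⁻¹' S ∩ Z ⁻¹' T ∩ W ⁻¹' {w}) * μ (W ⁻¹' {w})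
      = μ (X ⁻¹' S ∩ W ⁻¹' {w}) * μ (Z ⁻¹' T ∩ W ⁻¹' {w}) := by
  by_cases hw : μ (W ⁻¹' {w}) = 0
  · rw [measure_mono_null Set.inter_subset_right hw,
      measure_mono_null Set.inter_subset_right hw]
    simp [hw]
  obtain ⟨ω₀, hω₀⟩ : (W ⁻¹' {w}).Nonempty := by
    rcases Set.eq_empty_or_nonempty (W ⁻¹' {w}) with h | h
    · exact absurd (h ▸ measure_empty) hw
    · exact h
  have hfib_m' : MeasurableSet[MeasurableSpace.comap W inferInstance] (W ⁻¹' {w}) :=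
    ⟨{w}, measurableSet_singleton w, rfl⟩
  have hfib : MeasurableSet (W ⁻¹' {w}) := hW (measurableSet_singleton w)
  have hle : MeasurableSpace.comap W inferInstance ≤ mΩ := hW.comap_le
  have hae := (condIndepFun_iff_condExp_inter_preimage_eq_mul hX hZ).mp hind S T hS hT
  have key : ∀ s : Set Ω, MeasurableSet s →
      ∫ x in W ⁻¹' {w}, (μ⟦s | MeasurableSpace.comap W inferInstance⟧) x ∂μ
        = (μ (s ∩ W ⁻¹' {w})).toReal := by
    intro s hs
    have hint : Integrable (s.indicator (fun _ => (1 : ℝ))) μ :=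
      (integrable_const (1 : ℝ)).indicator hs
    rw [setIntegral_condExp hle hint hfib_m', setIntegral_indicator hs, setIntegral_const]
    simp [Set.inter_comm, measureReal_def]
  have hconst : ∀ s : Set Ω, ∀ x ∈ W ⁻¹' {w},
      (μ⟦s | MeasurableSpace.comap W inferInstance⟧) x
        = (μ⟦s | MeasurableSpace.comap W inferInstance⟧) ω₀ := by
    intro s x hx
    exact const_on_fiber stronglyMeasurable_condExp (hx.trans hω₀.symm)
  have hval : ∀ s : Set Ω, MeasurableSet s →
      (μ⟦s | MeasurableSpace.comap W inferInstance⟧) ω₀ * (μ (W ⁻¹' {w})).toReal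
        = (μ (s ∩ W ⁻¹' {w})).toReal := by
    intro s hs
    have h2 : ∫ x in W ⁻¹' {w}, (μ⟦s | MeasurableSpace.comap W inferInstance⟧) x ∂μ
        = (μ⟦s | MeasurableSpace.comap W inferInstance⟧) ω₀ * (μ (W ⁻¹' {w})).toReal := by
      rw [setIntegral_congr_fun hfib (fun x hx => hconst s x hx), setIntegral_const]
      rw [smul_eq_mul, measureReal_def]; ring
    rw [← h2, key s hs]
  have hST : MeasurableSet (X ⁻¹' S ∩ Z ⁻¹' T) := (hX hS).inter (hZ hT)
  have hXS : MeasurableSet (X ⁻¹' S) := hX hS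
  have hZT : MeasurableSet (Z ⁻¹' T) := hZ hT
  have hprod : ∫ x in W ⁻¹' {w},
        (μ⟦X ⁻¹' S ∩ Z ⁻¹' T | MeasurableSpace.comap W inferInstance⟧) x ∂μ
      = ∫ x in W ⁻¹' {w},
        (μ⟦X ⁻¹' S | MeasurableSpace.comap W inferInstance⟧) x
          * (μ⟦Z ⁻¹' T | MeasurableSpace.comap W inferInstance⟧) x ∂μ :=
    setIntegral_congr_ae hfib (hae.mono fun x hx _ => hx)
  have hrhs : ∫ x in W ⁻¹' {w},
        (μ⟦X ⁻¹' S | MeasurableSpace.comap W inferInstance⟧) x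
          * (μ⟦Z ⁻¹' T | MeasurableSpace.comap W inferInstance⟧) x ∂μ
      = (μ⟦X ⁻¹' S | MeasurableSpace.comap W inferInstance⟧) ω₀
          * (μ⟦Z ⁻¹' T | MeasurableSpace.comap W inferInstance⟧) ω₀
          * (μ (W ⁻¹' {w})).toReal := by
    rw [setIntegral_congr_fun hfib
      (fun x hx => by rw [hconst _ x hx, hconst _ x hx]), setIntegral_const]
    rw [smul_eq_mul, measureReal_def]; ring
  have hreal : (μ (X ⁻¹' S ∩ Z ⁻¹' T ∩ W ⁻¹' {w})).toReal * (μ (W ⁻¹' {w})).toReal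
      = (μ (X ⁻¹' S ∩ W ⁻¹' {w})).toReal * (μ (Z ⁻¹' T ∩ W ⁻¹' {w})).toReal := by
    rw [← hval _ hXS, ← hval _ hZT, ← key _ hST, hprod, hrhs]
    ring
  rw [← ENNReal.toReal_mul, ← ENNReal.toReal_mul] at hreal
  exact ENNReal.toReal_eq_toReal_iff' (by finiteness) (by finiteness) |>.mp hreal

lemma cond_eq_of_fiber {μ : Measure Ω} [IsProbabilityMeasure μ]
    {s t fib : Set Ω} (hs : MeasurableSet s) (hfib : MeasurableSet fib)
    (hkey : μ (s ∩ t ∩ fib) * μ fib = μ (s ∩ fib) * μ (t ∩ fib))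
    (hpos : μ (s ∩ fib) ≠ 0) :
    μ[|s ∩ fib] t = μ[|fib] t := by
  have hfibpos : μ fib ≠ 0 := fun h => hpos (measure_mono_null Set.inter_subset_right h)
  rw [cond_apply (hs.inter hfib), cond_apply hfib]
  have h1 : (s ∩ fib) ∩ t = s ∩ t ∩ fib := by ext x; simp; tauto
  have h2 : fib ∩ t = t ∩ fib := Set.inter_comm _ _
  rw [h1, h2]
  -- pass to real numbers
  have hkeyR : (μ (s ∩ t ∩ fib)).toReal * (μ fib).toReal
      = (μ (s ∩ fib)).toReal * (μ (t ∩ fib)).toReal := by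
    rw [← ENNReal.toReal_mul, ← ENNReal.toReal_mul, hkey]
  have hfz : (μ fib).toReal ≠ 0 := by
    simp [ENNReal.toReal_eq_zero_iff, hfibpos, measure_ne_top]
  have hsz : (μ (s ∩ fib)).toReal ≠ 0 := by
    simp [ENNReal.toReal_eq_zero_iff, hpos, measure_ne_top]
  refine (ENNReal.toReal_eq_toReal_iff' (by finiteness) (by finiteness)).mp ?_
  rw [ENNReal.toReal_mul, ENNReal.toReal_mul, ENNReal.toReal_inv, ENNReal.toReal_inv]
  field_simp
  linarith [hkeyR]

lemma integral_cond_congr_law {μ : Measure Ω} {Y : Ω → ℝ} (hY : Measurable Y)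
    {s₁ s₂ : Set Ω}
    (h : ∀ E : Set ℝ, MeasurableSet E → μ[|s₁] (Y ⁻¹' E) = μ[|s₂] (Y ⁻¹' E)) :
    ∫ ω, Y ω ∂μ[|s₁] = ∫ ω, Y ω ∂μ[|s₂] := by
  have hmap : (μ[|s₁]).map Y = (μ[|s₂]).map Y :=
    Measure.ext fun E hE => by rw [Measure.map_apply hY hE, Measure.map_apply hY hE, h E hE]
  have i1 : ∫ ω, Y ω ∂μ[|s₁] = ∫ y, y ∂((μ[|s₁]).map Y) :=
    (integral_map hY.aemeasurable aestronglyMeasurable_id).symm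
  have i2 : ∫ ω, Y ω ∂μ[|s₂] = ∫ y, y ∂((μ[|s₂]).map Y) :=
    (integral_map hY.aemeasurable aestronglyMeasurable_id).symm
  rw [i1, i2, hmap]

end Prop1Aux

/-- Proposition 1 (identification): in the six-arm trial `T_VI`, suppose
(i) `(A,M)` is jointly randomized: conditionally independent of all potential
outcomes `(Y^{a,m}, B^{a,m})` given `L`; (ii) consistency; (iii) belief determinism
`B^{a,m} = m` a.s. for `m ∈ {0,1}`; (iv) dismissible component condition
`Y ⟂ M | L, A, B`; and (v) positivity. Then for `a, m ∈ {0,1}`,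
`E[Y^{a,m}] = Σ_l E[Y | L=l, A=a, B=m, M=−1] · P(L=l)`: the mean counterfactual is
identified from the two-arm (`M = −1`) data. -/
theorem proposition_one_identification
    {Ω : Type*} [mΩ : MeasurableSpace Ω] [StandardBorelSpace Ω] [Nonempty Ω]
    (μ : Measure Ω) [IsProbabilityMeasure μ]
    (A M B : Ω → ℤ) (L : Ω → ℕ) (Y : Ω → ℝ)
    (Y' : ℤ → ℤ → Ω → ℝ) (B' : ℤ → ℤ → Ω → ℤ)
    (hA : Measurable A) (hM : Measurable M) (hB : Measurable B) (hL : Measurable L)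
    (hY : Measurable Y) (hY' : ∀ a m, Measurable (Y' a m))
    (hB' : ∀ a m, Measurable (B' a m))
    (hYbd : ∃ C, ∀ ω, |Y ω| ≤ C) (hY'bd : ∀ a m, ∃ C, ∀ ω, |Y' a m ω| ≤ C)
    -- (i) randomization: `(A,M)` ⟂ (all potential outcomes) | `L`
    (hrand : CondIndepFun (MeasurableSpace.comap L inferInstance) hL.comap_le
      (fun ω => (A ω, M ω))
      (fun ω => fun p : ℤ × ℤ => (Y' p.1 p.2 ω, B' p.1 p.2 ω)) μ)
    -- (ii) consistency
    (hcons : ∀ (a m : ℤ) (ω : Ω), A ω = a → M ω = m →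
      Y ω = Y' a m ω ∧ B ω = B' a m ω)
    -- (iii) belief determinism
    (hdet : ∀ a m : ℤ, (a = 0 ∨ a = 1) → (m = 0 ∨ m = 1) →
      ∀ᵐ ω ∂μ, B' a m ω = m)
    -- (iv) dismissible component condition: `Y ⟂ M | L, A, B`
    (hdcc : CondIndepFun
      (MeasurableSpace.comap (fun ω => (L ω, A ω, B ω)) inferInstance)
      (((hL.prodMk (hA.prodMk hB)).comap_le)) Y M μ)
    -- (v) positivity
    (hposB : ∀ (b a : ℤ), (b = 0 ∨ b = 1) → (a = 0 ∨ a = 1) → ∀ l : ℕ,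
      μ {ω | L ω = l} ≠ 0 →
      μ {ω | B ω = b ∧ L ω = l ∧ A ω = a ∧ M ω = -1} ≠ 0)
    (hposAM : ∀ (a m : ℤ), (a = 0 ∨ a = 1) → (m = -1 ∨ m = 0 ∨ m = 1) → ∀ l : ℕ,
      μ {ω | L ω = l} ≠ 0 → μ {ω | A ω = a ∧ M ω = m ∧ L ω = l} ≠ 0) :
    ∀ a m : ℤ, (a = 0 ∨ a = 1) → (m = 0 ∨ m = 1) →
      (∫ ω, Y' a m ω ∂μ) =
        ∑' l : ℕ,
          (∫ ω, Y ω ∂(μ[|{ω | L ω = l ∧ A ω = a ∧ B ω = m ∧ M ω = -1}]))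
            * (μ {ω | L ω = l}).toReal := by
  intro a m ha hm
  classical
  obtain ⟨C, hC⟩ := hY'bd a m
  have hint : Integrable (Y' a m) μ :=
    ⟨(hY' a m).aestronglyMeasurable,
      HasFiniteIntegral.of_bounded (C := C)
        (Filter.Eventually.of_forall fun ω => by rw [Real.norm_eq_abs]; exact hC ω)⟩
  have hLl : ∀ l : ℕ, MeasurableSet (L ⁻¹' {l}) := fun l => hL (measurableSet_singleton l)
  have hU : (⋃ l : ℕ, L ⁻¹' {l}) = Set.univ := by ext ω; simp
  have hdisj : Pairwise (Function.onFun Disjoint fun l : ℕ => L ⁻¹' {l}) := by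
    intro i j hij
    simp only [Function.onFun, Set.disjoint_left]
    intro ω h1 h2
    exact hij ((h1 : L ω = i).symm.trans h2)
  have hpart : ∫ ω, Y' a m ω ∂μ = ∑' l : ℕ, ∫ ω in L ⁻¹' {l}, Y' a m ω ∂μ := by
    rw [← setIntegral_univ (μ := μ) (f := fun ω => Y' a m ω), ← hU,
      integral_iUnion hLl hdisj (hU ▸ hint.integrableOn)]
  -- a general fact relating conditional integrals and set integrals
  have hcondmul : ∀ (f : Ω → ℝ) (s : Set Ω),
      (∫ ω, f ω ∂μ[|s]) * (μ s).toReal = ∫ ω in s, f ω ∂μ := by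
    intro f s
    by_cases hs0 : μ s = 0
    · rw [cond_eq_zero_of_meas_eq_zero hs0, Measure.restrict_eq_zero.mpr hs0]
      simp
    · have hsR : (μ s).toReal ≠ 0 := by
        simp [ENNReal.toReal_eq_zero_iff, hs0, measure_ne_top]
      rw [ProbabilityTheory.cond, integral_smul_measure, smul_eq_mul, ENNReal.toReal_inv]
      field_simp
  rw [hpart]
  refine tsum_congr fun l => ?_
  by_cases h0 : μ {ω | L ω = l} = 0
  · have h0' : μ (L ⁻¹' {l}) = 0 := h0
    rw [Measure.restrict_eq_zero.mpr h0', integral_zero_measure, h0]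
    simp
  -- positive case
  have h0' : μ (L ⁻¹' {l}) ≠ 0 := h0
  have hWmeas : Measurable (fun ω => (L ω, A ω, B ω)) := hL.prodMk (hA.prodMk hB)
  have hAMmeas : Measurable (fun ω => (A ω, M ω)) := hA.prodMk hM
  have hsAM : MeasurableSet ((fun ω => (A ω, M ω)) ⁻¹' {(a, m)}) :=
    hAMmeas (measurableSet_singleton _)
  have hfibW : MeasurableSet ((fun ω => (L ω, A ω, B ω)) ⁻¹' {((l : ℕ), a, m)}) :=
    hWmeas (measurableSet_singleton _)
  have hs1meas : MeasurableSet ((fun ω => (A ω, M ω)) ⁻¹' {(a, m)} ∩ L ⁻¹' {l}) :=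
    hsAM.inter (hLl l)
  have he1 : (fun ω => (A ω, M ω)) ⁻¹' {(a, m)} ∩ L ⁻¹' {l}
      = {ω | A ω = a ∧ M ω = m ∧ L ω = l} := by
    ext ω; simp [Prod.ext_iff, and_assoc]
  have hμs1 : μ ((fun ω => (A ω, M ω)) ⁻¹' {(a, m)} ∩ L ⁻¹' {l}) ≠ 0 := by
    rw [he1]; exact hposAM a m ha (Or.inr hm) l h0
  -- Step 1: randomization
  have hZmeas : Measurable (fun ω => fun p : ℤ × ℤ => (Y' p.1 p.2 ω, B' p.1 p.2 ω)) :=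
    measurable_pi_lambda _ fun p => ((hY' p.1 p.2).prodMk (hB' p.1 p.2))
  have step1 : ∫ ω, Y' a m ω ∂μ[|(fun ω => (A ω, M ω)) ⁻¹' {(a, m)} ∩ L ⁻¹' {l}]
      = ∫ ω, Y' a m ω ∂μ[|L ⁻¹' {l}] := by
    refine Prop1Aux.integral_cond_congr_law (hY' a m) fun E hE => ?_
    refine Prop1Aux.cond_eq_of_fiber hsAM (hLl l) ?_ hμs1
    have hTmeas : MeasurableSet ((fun f : ℤ × ℤ → ℝ × ℤ => (f (a, m)).1) ⁻¹' E) :=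
      (measurable_fst.comp (measurable_pi_apply (a, m))) hE
    exact Prop1Aux.fiber_mul hL hAMmeas hZmeas hrand (measurableSet_singleton (a, m))
      hTmeas l
  -- Step 2: consistency
  have step2 : ∫ ω, Y' a m ω ∂μ[|(fun ω => (A ω, M ω)) ⁻¹' {(a, m)} ∩ L ⁻¹' {l}]
      = ∫ ω, Y ω ∂μ[|(fun ω => (A ω, M ω)) ⁻¹' {(a, m)} ∩ L ⁻¹' {l}] := by
    refine integral_congr_ae ?_
    have h0c : μ[|(fun ω => (A ω, M ω)) ⁻¹' {(a, m)} ∩ L ⁻¹' {l}]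
        (((fun ω => (A ω, M ω)) ⁻¹' {(a, m)} ∩ L ⁻¹' {l})ᶜ) = 0 := by
      rw [cond_apply hs1meas]; simp
    rw [Filter.EventuallyEq, ae_iff]
    refine measure_mono_null ?_ h0c
    intro ω hω
    simp only [Set.mem_setOf_eq] at hω
    intro hmem
    have hAM : (A ω, M ω) = (a, m) := hmem.1
    exact hω ((hcons a m ω (congrArg Prod.fst hAM) (congrArg Prod.snd hAM)).1.symm)
  -- Step 3: belief determinism, switch to conditioning on (L,A,B) and M
  have hsetseq : ((fun ω => (A ω, M ω)) ⁻¹' {(a, m)} ∩ L ⁻¹' {l} : Set Ω)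
      =ᵐ[μ] ((M ⁻¹' {m} ∩ (fun ω => (L ω, A ω, B ω)) ⁻¹' {((l : ℕ), a, m)} : Set Ω)) := by
    filter_upwards [hdet a m ha hm] with ω hBm
    simp only [Set.mem_inter_iff, Set.mem_preimage, Set.mem_singleton_iff, Prod.mk.injEq,
      eq_iff_iff]
    show ω ∈ ((fun ω => (A ω, M ω)) ⁻¹' {(a, m)} ∩ L ⁻¹' {l} : Set Ω) ↔
      ω ∈ ((M ⁻¹' {m} ∩ (fun ω => (L ω, A ω, B ω)) ⁻¹' {((l : ℕ), a, m)} : Set Ω))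
    simp only [Set.mem_inter_iff, Set.mem_preimage, Set.mem_singleton_iff, Prod.mk.injEq]
    constructor
    · rintro ⟨⟨hAa, hMm⟩, hLl'⟩
      exact ⟨hMm, hLl', hAa, ((hcons a m ω hAa hMm).2).trans hBm⟩
    · rintro ⟨hMm, hLl', hAa, -⟩
      exact ⟨⟨hAa, hMm⟩, hLl'⟩
  have hconds : μ[|(fun ω => (A ω, M ω)) ⁻¹' {(a, m)} ∩ L ⁻¹' {l}]
      = μ[|M ⁻¹' {m} ∩ (fun ω => (L ω, A ω, B ω)) ⁻¹' {((l : ℕ), a, m)}] := by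
    simp only [ProbabilityTheory.cond]
    rw [measure_congr hsetseq, Measure.restrict_congr_set hsetseq]
  have hμs2 : μ (M ⁻¹' {m} ∩ (fun ω => (L ω, A ω, B ω)) ⁻¹' {((l : ℕ), a, m)}) ≠ 0 := by
    rw [← measure_congr hsetseq]; exact hμs1
  -- Step 4: dismissible component condition
  have dccProb : ∀ (m' : ℤ),
      μ (M ⁻¹' {m'} ∩ (fun ω => (L ω, A ω, B ω)) ⁻¹' {((l : ℕ), a, m)}) ≠ 0 →
      ∀ E : Set ℝ, MeasurableSet E →
      μ[|M ⁻¹' {m'} ∩ (fun ω => (L ω, A ω, B ω)) ⁻¹' {((l : ℕ), a, m)}] (Y ⁻¹' E)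
        = μ[|(fun ω => (L ω, A ω, B ω)) ⁻¹' {((l : ℕ), a, m)}] (Y ⁻¹' E) := by
    intro m' hpos E hE
    refine Prop1Aux.cond_eq_of_fiber (hM (measurableSet_singleton m')) hfibW ?_ hpos
    have hk := Prop1Aux.fiber_mul hWmeas hY hM hdcc hE (measurableSet_singleton m')
      (((l : ℕ), a, m) : ℕ × ℤ × ℤ)
    rw [Set.inter_comm (M ⁻¹' {m'}) (Y ⁻¹' E), hk, mul_comm]
  have hpos3 : μ (M ⁻¹' {(-1 : ℤ)} ∩ (fun ω => (L ω, A ω, B ω)) ⁻¹' {((l : ℕ), a, m)})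
      ≠ 0 := by
    have h := hposB m a hm ha l h0
    have he3 : M ⁻¹' {(-1 : ℤ)} ∩ (fun ω => (L ω, A ω, B ω)) ⁻¹' {((l : ℕ), a, m)}
        = {ω | B ω = m ∧ L ω = l ∧ A ω = a ∧ M ω = -1} := by
      ext ω; simp [Prod.ext_iff]; tauto
    rw [he3]; exact h
  have step4 : ∫ ω, Y ω ∂μ[|M ⁻¹' {m} ∩ (fun ω => (L ω, A ω, B ω)) ⁻¹' {((l : ℕ), a, m)}]
      = ∫ ω, Y ω ∂μ[|M ⁻¹' {(-1 : ℤ)} ∩ (fun ω => (L ω, A ω, B ω)) ⁻¹' {((l : ℕ), a, m)}] := by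
    refine Prop1Aux.integral_cond_congr_law hY fun E hE => ?_
    rw [dccProb m hμs2 E hE, dccProb (-1) hpos3 E hE]
  have hgoalset : {ω | L ω = l ∧ A ω = a ∧ B ω = m ∧ M ω = -1}
      = M ⁻¹' {(-1 : ℤ)} ∩ (fun ω => (L ω, A ω, B ω)) ⁻¹' {((l : ℕ), a, m)} := by
    ext ω; simp [Prod.ext_iff]; tauto
  rw [← hcondmul (fun ω => Y' a m ω) (L ⁻¹' {l})]
  have hchain : ∫ ω, Y' a m ω ∂μ[|L ⁻¹' {l}]
      = ∫ ω, Y ω ∂μ[|{ω | L ω = l ∧ A ω = a ∧ B ω = m ∧ M ω = -1}] := by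
    rw [hgoalset, ← step4, ← hconds, ← step2, step1]
  rw [hchain]
  rfl
end

section
/- (Law of total expectation step with 'message-equals-belief' determinism) If B = M almost surely on the event {M ∈ {0,1}}, (A,M) is independent of (Y^{a,m})_{a,m} given L, and consistency holds, then for a,m ∈ {0,1} with P(A=a, M=m, L=l) > 0 for all l in the support of L: E[Y^{a,m}] = Σ_l E[Y | M=m, B=m, A=a, L=l] · P(L=l). -/
open MeasureTheory ProbabilityTheory

lemma constant_on_fiber' {Ω : Type*} (L : Ω → ℕ)
    (h : Ω → ℝ) (hh : Measurable[MeasurableSpace.comap L inferInstance] h)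
    {ω ω' : Ω} (hLω : L ω = L ω') : h ω = h ω' := by
  obtain ⟨s, -, hs⟩ := hh (measurableSet_singleton (h ω))
  have hω : ω ∈ L ⁻¹' s := by rw [hs]; exact rfl
  have hω' : ω' ∈ L ⁻¹' s := by simpa [Set.mem_preimage, ← hLω] using hω
  rw [hs] at hω'
  exact hω'.symm

/-- Law-of-total-expectation step with message-equals-belief determinism: if `B = M`
a.s. on `{M ∈ {0,1}}`, `(A,M)` is conditionally independent of all potential outcomes
`(Y^{a,m})` given `L`, and consistency holds, then for `a, m ∈ {0,1}` with
`P(A=a, M=m, L=l) > 0` for all `l` in the support of `L`: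
`E[Y^{a,m}] = Σ_l E[Y | M=m, B=m, A=a, L=l] · P(L=l)`. -/
theorem lte_step_message_equals_belief
    {Ω : Type*} [mΩ : MeasurableSpace Ω] [StandardBorelSpace Ω] [Nonempty Ω]
    (μ : Measure Ω) [IsProbabilityMeasure μ]
    (A M B : Ω → ℤ) (L : Ω → ℕ) (Y : Ω → ℝ) (Y' : ℤ → ℤ → Ω → ℝ)
    (hA : Measurable A) (hM : Measurable M) (hB : Measurable B) (hL : Measurable L)
    (hY : Measurable Y) (hY' : ∀ a m, Measurable (Y' a m))
    (hYbd : ∃ C, ∀ ω, |Y ω| ≤ C) (hY'bd : ∀ a m, ∃ C, ∀ ω, |Y' a m ω| ≤ C)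
    -- belief determinism: `B = M` a.s. on the event `{M ∈ {0,1}}`
    (hdet : ∀ᵐ ω ∂μ, (M ω = 0 ∨ M ω = 1) → B ω = M ω)
    -- randomization: `(A,M)` ⟂ (all potential outcomes) | `L`
    (hrand : CondIndepFun (MeasurableSpace.comap L inferInstance) hL.comap_le
      (fun ω => (A ω, M ω)) (fun ω => fun p : ℤ × ℤ => Y' p.1 p.2 ω) μ)
    -- consistency
    (hcons : ∀ (a m : ℤ) (ω : Ω), A ω = a → M ω = m → Y ω = Y' a m ω) :
    ∀ a m : ℤ, (a = 0 ∨ a = 1) → (m = 0 ∨ m = 1) →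
      (∀ l : ℕ, μ {ω | L ω = l} ≠ 0 → μ {ω | A ω = a ∧ M ω = m ∧ L ω = l} ≠ 0) →
      (∫ ω, Y' a m ω ∂μ) =
        ∑' l : ℕ,
          (∫ ω, Y ω ∂(μ[|{ω | M ω = m ∧ B ω = m ∧ A ω = a ∧ L ω = l}]))
            * (μ {ω | L ω = l}).toReal := by
  intro a m ha hma hpos
  classical
  obtain ⟨CF, hCF⟩ := hY'bd a m
  have _dummy : True := trivial
  set f : Ω → ℝ := Y' a m with hfdef
  have hf_meas : Measurable f := hY' a m
  have hf_int : Integrable f μ :=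
    (integrable_const CF).mono' hf_meas.aestronglyMeasurable
      (ae_of_all _ fun ω => by simpa using hCF ω)
  set S : Set Ω := A ⁻¹' {a} ∩ M ⁻¹' {m} with hSdef
  have hS_meas : MeasurableSet S :=
    (hA (measurableSet_singleton a)).inter (hM (measurableSet_singleton m))
  set E : ℕ → Set Ω := fun l => L ⁻¹' {l} with hEdef
  have hE_meas : ∀ l, MeasurableSet (E l) := fun l => hL (measurableSet_singleton l)
  have hE_measL : ∀ l, MeasurableSet[(MeasurableSpace.comap L inferInstance)] (E l) := fun l => ⟨{l}, measurableSet_singleton l, rfl⟩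
  have hEL : ∀ l : ℕ, {ω | L ω = l} = E l := fun l => rfl
  -- ∫ condexp of an indicator over an atom of L
  have atom_int : ∀ (l : ℕ) (u : Set Ω), MeasurableSet u →
      ∫ ω in E l, (μ⟦u | (MeasurableSpace.comap L inferInstance)⟧) ω ∂μ = (μ (u ∩ E l)).toReal := by
    intro l u hu
    rw [setIntegral_condExp hL.comap_le ((integrable_const (1:ℝ)).indicator hu) (hE_measL l),
      setIntegral_indicator hu, setIntegral_const, Set.inter_comm]
    simp [measureReal_def]
  -- condexps are constant on atoms of L
  have const_atom : ∀ (h : Ω → ℝ), StronglyMeasurable[(MeasurableSpace.comap L inferInstance)] h →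
      ∀ l : ℕ, ∀ ω ∈ E l, ∀ ω' ∈ E l, h ω = h ω' := by
    intro h hh l ω hω ω' hω'
    exact constant_on_fiber' L h hh.measurable (by
      simp only [hEdef, Set.mem_preimage, Set.mem_singleton_iff] at hω hω'
      rw [hω, hω'])
  -- the conditional-independence product formula, integrated over an atom
  have g_meas : Measurable (fun ω => fun p : ℤ × ℤ => Y' p.1 p.2 ω) :=
    measurable_pi_lambda _ fun p => hY' p.1 p.2
  have fpair_meas : Measurable (fun ω => (A ω, M ω)) := hA.prodMk hM
  have hrand' := (condIndepFun_iff_condExp_inter_preimage_eq_mul (μ := μ)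
    (hm' := hL.comap_le) fpair_meas g_meas).mp hrand
  have key : ∀ l : ℕ, μ (E l) ≠ 0 → ∀ u : Set ℝ, MeasurableSet u →
      (μ (S ∩ f ⁻¹' u ∩ E l)).toReal * (μ (E l)).toReal
        = (μ (S ∩ E l)).toReal * (μ (f ⁻¹' u ∩ E l)).toReal := by
    intro l hEl u hu
    obtain ⟨ω₀, hω₀⟩ : (E l).Nonempty := nonempty_of_measure_ne_zero hEl
    have spec := hrand' {(a, m)} ((fun h : ℤ × ℤ → ℝ => h (a, m)) ⁻¹' u)
      (measurableSet_singleton _) ((measurable_pi_apply (a, m)) hu)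
    have hpre1 : (fun ω => (A ω, M ω)) ⁻¹' {(a, m)} = S := by
      ext ω; simp [hSdef, Prod.ext_iff]
    have hpre2 : (fun ω => fun p : ℤ × ℤ => Y' p.1 p.2 ω) ⁻¹'
        ((fun h : ℤ × ℤ → ℝ => h (a, m)) ⁻¹' u) = f ⁻¹' u := rfl
    rw [hpre1, hpre2] at spec
    have hint : ∫ ω in E l, (μ⟦S ∩ f ⁻¹' u | (MeasurableSpace.comap L inferInstance)⟧) ω ∂μ
        = ∫ ω in E l, ((μ⟦S | (MeasurableSpace.comap L inferInstance)⟧) ω * (μ⟦f ⁻¹' u | (MeasurableSpace.comap L inferInstance)⟧) ω) ∂μ :=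
      setIntegral_congr_ae (hE_meas l) (spec.mono fun ω h _ => h)
    rw [atom_int l _ (hS_meas.inter (hf_meas hu))] at hint
    set cs : ℝ := (μ⟦S | (MeasurableSpace.comap L inferInstance)⟧) ω₀ with hcsdef
    set ct : ℝ := (μ⟦f ⁻¹' u | (MeasurableSpace.comap L inferInstance)⟧) ω₀ with hctdef
    have hcs : ∀ ω ∈ E l, (μ⟦S | (MeasurableSpace.comap L inferInstance)⟧) ω = cs :=
      fun ω hω => const_atom _ stronglyMeasurable_condExp l ω hω ω₀ hω₀
    have hct : ∀ ω ∈ E l, (μ⟦f ⁻¹' u | (MeasurableSpace.comap L inferInstance)⟧) ω = ct :=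
      fun ω hω => const_atom _ stronglyMeasurable_condExp l ω hω ω₀ hω₀
    have hRHS : ∫ ω in E l, ((μ⟦S | (MeasurableSpace.comap L inferInstance)⟧) ω * (μ⟦f ⁻¹' u | (MeasurableSpace.comap L inferInstance)⟧) ω) ∂μ
        = (cs * ct) * (μ (E l)).toReal := by
      rw [setIntegral_congr_fun (hE_meas l)
        (fun ω hω => by rw [hcs ω hω, hct ω hω] : ∀ ω ∈ E l,
          (μ⟦S | (MeasurableSpace.comap L inferInstance)⟧) ω * (μ⟦f ⁻¹' u | (MeasurableSpace.comap L inferInstance)⟧) ω = cs * ct),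
        setIntegral_const, smul_eq_mul, measureReal_def]
      ring
    have hcs' : cs * (μ (E l)).toReal = (μ (S ∩ E l)).toReal := by
      have h1 := atom_int l S hS_meas
      rw [setIntegral_congr_fun (hE_meas l) hcs, setIntegral_const, smul_eq_mul, measureReal_def] at h1
      linarith
    have hct' : ct * (μ (E l)).toReal = (μ (f ⁻¹' u ∩ E l)).toReal := by
      have h1 := atom_int l (f ⁻¹' u) (hf_meas hu)
      rw [setIntegral_congr_fun (hE_meas l) hct, setIntegral_const, smul_eq_mul, measureReal_def] at h1
      linarith
    calc (μ (S ∩ f ⁻¹' u ∩ E l)).toReal * (μ (E l)).toReal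
        = (cs * ct * (μ (E l)).toReal) * (μ (E l)).toReal := by rw [hint, hRHS]
      _ = (cs * (μ (E l)).toReal) * (ct * (μ (E l)).toReal) := by ring
      _ = (μ (S ∩ E l)).toReal * (μ (f ⁻¹' u ∩ E l)).toReal := by rw [hcs', hct']
  -- upgrade to an ENNReal identity
  have keyE : ∀ l : ℕ, μ (E l) ≠ 0 → ∀ u : Set ℝ, MeasurableSet u →
      μ (E l) * μ (f ⁻¹' u ∩ (S ∩ E l)) = μ (S ∩ E l) * μ (f ⁻¹' u ∩ E l) := by
    intro l hEl u hu
    have h := key l hEl u hu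
    have hset : f ⁻¹' u ∩ (S ∩ E l) = S ∩ f ⁻¹' u ∩ E l := by
      ext ω; simp only [Set.mem_inter_iff]; tauto
    rw [hset]
    refine (ENNReal.toReal_eq_toReal_iff'
      (ENNReal.mul_ne_top (measure_ne_top μ _) (measure_ne_top μ _))
      (ENNReal.mul_ne_top (measure_ne_top μ _) (measure_ne_top μ _))).mp ?_
    rw [ENNReal.toReal_mul, ENNReal.toReal_mul]
    linarith
  -- the integral identity on each atom
  have star : ∀ l : ℕ, μ (E l) ≠ 0 →
      (μ (E l)).toReal * ∫ ω in S ∩ E l, f ω ∂μ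
        = (μ (S ∩ E l)).toReal * ∫ ω in E l, f ω ∂μ := by
    intro l hEl
    have hmeas_eq : (μ (E l)) • (μ.restrict (S ∩ E l)).map f
        = (μ (S ∩ E l)) • (μ.restrict (E l)).map f := by
      ext u hu
      rw [Measure.smul_apply, Measure.smul_apply, Measure.map_apply hf_meas hu,
        Measure.map_apply hf_meas hu, Measure.restrict_apply (hf_meas hu),
        Measure.restrict_apply (hf_meas hu), smul_eq_mul, smul_eq_mul]
      exact keyE l hEl u hu
    have h1 : ∫ x, x ∂((μ (E l)) • (μ.restrict (S ∩ E l)).map f)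
        = (μ (E l)).toReal * ∫ ω in S ∩ E l, f ω ∂μ := by
      rw [integral_smul_measure,
        integral_map (f := fun x : ℝ => x) hf_meas.aemeasurable
          measurable_id.aestronglyMeasurable]
      simp
    have h2 : ∫ x, x ∂((μ (S ∩ E l)) • (μ.restrict (E l)).map f)
        = (μ (S ∩ E l)).toReal * ∫ ω in E l, f ω ∂μ := by
      rw [integral_smul_measure,
        integral_map (f := fun x : ℝ => x) hf_meas.aemeasurable
          measurable_id.aestronglyMeasurable]
      simp
    rw [← h1, ← h2, hmeas_eq]
  -- decompose the total expectation over the partition {L = l}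
  have hUnion : (⋃ l, E l) = Set.univ := by
    ext ω; simp [hEdef]
  have hdisj : Pairwise (Function.onFun Disjoint E) := by
    intro i j hij
    simp only [Function.onFun, Set.disjoint_left, hEdef, Set.mem_preimage,
      Set.mem_singleton_iff]
    intro ω h1 h2
    exact hij (h1 ▸ h2 ▸ rfl)
  have hsum : ∫ ω, f ω ∂μ = ∑' l : ℕ, ∫ ω in E l, f ω ∂μ := by
    rw [← setIntegral_univ, ← hUnion,
      integral_iUnion hE_meas hdisj hf_int.integrableOn]
  -- identify each term
  have hterm : ∀ l : ℕ, ∫ ω in E l, f ω ∂μ =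
      (∫ ω, Y ω ∂(μ[|{ω | M ω = m ∧ B ω = m ∧ A ω = a ∧ L ω = l}]))
        * (μ (E l)).toReal := by
    intro l
    by_cases hEl : μ (E l) = 0
    · rw [Measure.restrict_eq_zero.mpr hEl]
      simp [hEl]
    · set C : Set Ω := {ω | M ω = m ∧ B ω = m ∧ A ω = a ∧ L ω = l} with hCdef
      set D : Set Ω := S ∩ E l with hDdef
      have hD_eq : {ω | A ω = a ∧ M ω = m ∧ L ω = l} = D := by
        ext ω
        simp only [hDdef, hSdef, hEdef, Set.mem_setOf_eq, Set.mem_inter_iff,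
          Set.mem_preimage, Set.mem_singleton_iff]
        tauto
      have hD_meas : MeasurableSet D := hS_meas.inter (hE_meas l)
      have hD_ne : μ D ≠ 0 := hD_eq ▸ hpos l hEl
      have hCD : C =ᵐ[μ] D := by
        rw [MeasureTheory.ae_eq_set]
        constructor
        · have hsub : C \ D ⊆ (∅ : Set Ω) := by
            intro ω hω
            rcases hω with ⟨⟨h1, h2, h3, h4⟩, h5⟩
            exact h5 (by
              simp only [hDdef, hSdef, hEdef, Set.mem_inter_iff, Set.mem_preimage,
                Set.mem_singleton_iff]
              exact ⟨⟨h3, h1⟩, h4⟩)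
          simpa using measure_mono_null hsub (by simp)
        · refine measure_mono_null (fun ω hω => ?_) (ae_iff.mp hdet)
          rcases hω with ⟨hωD, hωC⟩
          simp only [hDdef, hSdef, hEdef, Set.mem_inter_iff, Set.mem_preimage,
            Set.mem_singleton_iff] at hωD
          obtain ⟨⟨hAω, hMω⟩, hLω⟩ := hωD
          simp only [Set.mem_setOf_eq]
          intro hP
          have hBω : B ω = m := by
            rw [hP (by rcases hma with h | h <;> simp [hMω, h]), hMω]
          exact hωC ⟨hMω, hBω, hAω, hLω⟩
      have hμC : μ C = μ D := measure_congr hCD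
      have hres : μ.restrict C = μ.restrict D := Measure.restrict_congr_set hCD
      have hYD : ∫ ω in D, Y ω ∂μ = ∫ ω in D, f ω ∂μ := by
        refine setIntegral_congr_fun hD_meas (fun ω hω => ?_)
        simp only [hDdef, hSdef, hEdef, Set.mem_inter_iff, Set.mem_preimage,
          Set.mem_singleton_iff] at hω
        exact hcons a m ω hω.1.1 hω.1.2
      have hcondint : ∫ ω, Y ω ∂(μ[|C]) = (μ D).toReal⁻¹ * ∫ ω in D, f ω ∂μ := by
        show ∫ ω, Y ω ∂((μ C)⁻¹ • μ.restrict C) = _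
        rw [integral_smul_measure, hres, hμC, hYD, ENNReal.toReal_inv, smul_eq_mul]
      have hDtoReal : (μ D).toReal ≠ 0 :=
        ENNReal.toReal_ne_zero.mpr ⟨hD_ne, measure_ne_top μ D⟩
      have hstar := star l hEl
      rw [hcondint]
      field_simp
      linarith [hstar]
  calc ∫ ω, Y' a m ω ∂μ = ∑' l : ℕ, ∫ ω in E l, f ω ∂μ := hsum
    _ = ∑' l : ℕ, (∫ ω, Y ω ∂(μ[|{ω | M ω = m ∧ B ω = m ∧ A ω = a ∧ L ω = l}]))
          * (μ {ω | L ω = l}).toReal := tsum_congr fun l => by rw [hterm l, hEL l]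
end
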